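/- The slice topology on ℍ is not metrizable: there is no metric d on ℍ whose induced topology equals the slice topology τ_s(ℍ). -/

import Mathlib

open scoped Quaternion

/-- The slice `ℂ_I = ℝ + ℝI` inside the quaternions. -/
def qslice (I : ℍ[ℝ]) : Set ℍ[ℝ] := {q | ∃ x y : ℝ, q = (x : ℍ[ℝ]) + y • I}

/-- The slice topology on `ℍ`. -/
noncomputable def sliceTopology : TopologicalSpace ℍ[ℝ] :=
  ⨆ I ∈ {I : ℍ[ℝ] | I ^ 2 = -1},
    TopologicalSpace.coinduced (Subtype.val : qslice I → ℍ[ℝ]) inferInstance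

open Topology

noncomputable def sliceSeq (n : ℕ) : ℍ[ℝ] :=
  ⟨0, Real.cos (((n:ℝ)+1)⁻¹), Real.sin (((n:ℝ)+1)⁻¹), 0⟩

lemma theta_mem (n : ℕ) : ((n:ℝ)+1)⁻¹ ∈ Set.Ioc (0:ℝ) 1 := by
  constructor
  · positivity
  · rw [inv_le_one_iff₀]; right; linarith [Nat.cast_nonneg (α := ℝ) n]

lemma cos_theta_pos (n : ℕ) : 0 < Real.cos (((n:ℝ)+1)⁻¹) := by
  apply Real.cos_pos_of_mem_Ioo
  obtain ⟨h1, h2⟩ := theta_mem n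
  constructor <;> nlinarith [Real.pi_gt_three]

lemma sliceSeq_sq (n : ℕ) : sliceSeq n ^ 2 = -1 := by
  have := Real.sin_sq_add_cos_sq (((n:ℝ)+1)⁻¹)
  ext <;> simp only [pow_two, Quaternion.re_mul, Quaternion.imI_mul,
    Quaternion.imJ_mul, Quaternion.imK_mul] <;> simp [sliceSeq] <;> nlinarith [this]

lemma theta_inj : Function.Injective (fun n : ℕ => ((n:ℝ)+1)⁻¹) := by
  intro n m h
  simp only at h
  have hn : ((n:ℝ)+1) ≠ 0 := by positivity
  have hmm : ((m:ℝ)+1) ≠ 0 := by positivity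
  field_simp at h
  have h' : (n:ℝ) = m := by linarith
  exact_mod_cast h'

lemma sq_neg_one (I : ℍ[ℝ]) (h : I ^ 2 = -1) :
    I.re = 0 ∧ I.imI ^ 2 + I.imJ ^ 2 + I.imK ^ 2 = 1 := by
  rw [pow_two] at h
  have h1 : I.re*I.re - I.imI*I.imI - I.imJ*I.imJ - I.imK*I.imK = -1 := by
    have := congrArg QuaternionAlgebra.re h
    simpa [Quaternion.re_mul] using this
  have h2 : 2*I.re*I.imI = 0 := by
    have := congrArg QuaternionAlgebra.imI h
    simp [Quaternion.imI_mul] at this; linarith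
  have h3 : 2*I.re*I.imJ = 0 := by
    have := congrArg QuaternionAlgebra.imJ h
    simp [Quaternion.imJ_mul] at this; linarith
  have h4 : 2*I.re*I.imK = 0 := by
    have := congrArg QuaternionAlgebra.imK h
    simp [Quaternion.imK_mul] at this; linarith
  have hre : I.re = 0 := by nlinarith [sq_nonneg I.re]
  exact ⟨hre, by nlinarith⟩

lemma mem_slice_aux {I : ℍ[ℝ]} (hI : I ^ 2 = -1) {y : ℝ} (hy : y ≠ 0) {n : ℕ}
    (h : y • sliceSeq n ∈ qslice I) :
    ∃ c : ℝ, c ^ 2 = 1 ∧ I.imI = c * Real.cos (((n:ℝ)+1)⁻¹) ∧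
      I.imJ = c * Real.sin (((n:ℝ)+1)⁻¹) := by
  obtain ⟨hre, hnorm⟩ := sq_neg_one I hI
  obtain ⟨x, z, hxz⟩ := h
  have e1 : y * Real.cos (((n:ℝ)+1)⁻¹) = z * I.imI := by
    have := congrArg QuaternionAlgebra.imI hxz; rw [Quaternion.imI_smul] at this; simpa [sliceSeq] using this
  have e2 : y * Real.sin (((n:ℝ)+1)⁻¹) = z * I.imJ := by
    have := congrArg QuaternionAlgebra.imJ hxz; rw [Quaternion.imJ_smul] at this; simpa [sliceSeq] using this
  have e3 : (0:ℝ) = z * I.imK := by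
    have := congrArg QuaternionAlgebra.imK hxz; rw [Quaternion.imK_smul] at this; simpa [sliceSeq] using this
  have hz : z ≠ 0 := by
    intro h0
    rw [h0, zero_mul] at e1
    exact hy (by nlinarith [cos_theta_pos n, mul_self_nonneg y])
  have hK : I.imK = 0 := by
    rcases mul_eq_zero.mp e3.symm with h|h
    · exact absurd h hz
    · exact h
  have q1 : (y * Real.cos (((n:ℝ)+1)⁻¹))^2 = (z*I.imI)^2 := by rw [e1]
  have q2 : (y * Real.sin (((n:ℝ)+1)⁻¹))^2 = (z*I.imJ)^2 := by rw [e2]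
  have hc := Real.sin_sq_add_cos_sq (((n:ℝ)+1)⁻¹)
  have hyz : y^2 = z^2 := by
    linear_combination q1 + q2 - y^2*hc + z^2*hnorm - z^2*I.imK*hK
  have hz2 : z^2 ≠ 0 := pow_ne_zero _ hz
  refine ⟨y / z, ?_, ?_, ?_⟩
  · rw [div_pow, div_eq_one_iff_eq hz2]; exact hyz
  · rw [div_mul_eq_mul_div, eq_div_iff hz]; linear_combination -e1
  · rw [div_mul_eq_mul_div, eq_div_iff hz]; linear_combination -e2

lemma slice_unique {I : ℍ[ℝ]} (hI : I ^ 2 = -1) {y z : ℝ} (hy : y ≠ 0) (hz : z ≠ 0)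
    {n m : ℕ} (h1 : y • sliceSeq n ∈ qslice I) (h2 : z • sliceSeq m ∈ qslice I) :
    n = m := by
  obtain ⟨c, hc1, hcI, hcJ⟩ := mem_slice_aux hI hy h1
  obtain ⟨d, hd1, hdI, hdJ⟩ := mem_slice_aux hI hz h2
  have hcn := cos_theta_pos n
  have hcm := cos_theta_pos m
  have heq : c * Real.cos (((n:ℝ)+1)⁻¹) = d * Real.cos (((m:ℝ)+1)⁻¹) :=
    hcI.symm.trans hdI
  have hce : c = 1 ∨ c = -1 := by
    rcases mul_eq_zero.mp (show (c-1)*(c+1) = 0 by linear_combination hc1) with h|h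
    · left; linarith
    · right; linarith
  have hde : d = 1 ∨ d = -1 := by
    rcases mul_eq_zero.mp (show (d-1)*(d+1) = 0 by linear_combination hd1) with h|h
    · left; linarith
    · right; linarith
  have hcd : c = d := by
    rcases hce with h|h <;> rcases hde with h'|h' <;> rw [h, h'] at heq ⊢ <;> nlinarith
  have hcos : Real.cos (((n:ℝ)+1)⁻¹) = Real.cos (((m:ℝ)+1)⁻¹) := by
    have hc0 : c ≠ 0 := by intro h; rw [h] at hc1; norm_num at hc1
    have := hcI.symm.trans hdI
    rw [hcd] at this
    have hd0 : d ≠ 0 := by rw [← hcd]; exact hc0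
    exact mul_left_cancel₀ hd0 this
  have : ((n:ℝ)+1)⁻¹ = ((m:ℝ)+1)⁻¹ := by
    apply Real.injOn_cos _ _ hcos
    · obtain ⟨a, b⟩ := theta_mem n
      constructor <;> nlinarith [Real.pi_gt_three]
    · obtain ⟨a, b⟩ := theta_mem m
      constructor <;> nlinarith [Real.pi_gt_three]
  exact theta_inj this

lemma isOpen_slice_iff {U : Set ℍ[ℝ]} :
    IsOpen[sliceTopology] U ↔
      ∀ I : ℍ[ℝ], I ^ 2 = -1 → IsOpen (Subtype.val ⁻¹' U : Set (qslice I)) := by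
  unfold sliceTopology
  simp only [isOpen_iSup_iff, isOpen_coinduced, Set.mem_setOf_eq]

lemma smul_mem_qslice (y : ℝ) (n : ℕ) : y • sliceSeq n ∈ qslice (sliceSeq n) :=
  ⟨0, y, by simp⟩

lemma sliceSeq_ne_zero (n : ℕ) : sliceSeq n ≠ 0 := by
  intro h
  have := congrArg QuaternionAlgebra.imI h
  simp [sliceSeq] at this
  exact absurd this (ne_of_gt (cos_theta_pos n))

lemma slice_aux (B : ℕ → Set ℍ[ℝ]) (hBopen : ∀ n, IsOpen[sliceTopology] (B n))
    (hB0 : ∀ n, (0:ℍ[ℝ]) ∈ B n)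
    (hbasis : ∀ U : Set ℍ[ℝ], IsOpen[sliceTopology] U → (0:ℍ[ℝ]) ∈ U → ∃ n, B n ⊆ U) :
    False := by
  have key : ∀ n : ℕ, ∃ y : ℝ, y ≠ 0 ∧ y • sliceSeq n ∈ B n := by
    intro n
    have hslice := isOpen_slice_iff.mp (hBopen n) (sliceSeq n) (sliceSeq_sq n)
    have hcont : Continuous (fun y : ℝ => (⟨y • sliceSeq n, smul_mem_qslice y n⟩ :
        qslice (sliceSeq n))) :=
      Continuous.subtype_mk (continuous_id.smul continuous_const) _
    have hV : IsOpen ((fun y : ℝ => (⟨y • sliceSeq n, smul_mem_qslice y n⟩ :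
        qslice (sliceSeq n))) ⁻¹' (Subtype.val ⁻¹' B n)) := hslice.preimage hcont
    have h0 : (0:ℝ) ∈ (fun y : ℝ => (⟨y • sliceSeq n, smul_mem_qslice y n⟩ :
        qslice (sliceSeq n))) ⁻¹' (Subtype.val ⁻¹' B n) := by
      simp only [Set.mem_preimage, zero_smul]
      exact hB0 n
    have hnhds : (fun y : ℝ => (⟨y • sliceSeq n, smul_mem_qslice y n⟩ :
        qslice (sliceSeq n))) ⁻¹' (Subtype.val ⁻¹' B n) ∈ 𝓝[≠] (0:ℝ) :=
      mem_nhdsWithin_of_mem_nhds (hV.mem_nhds h0)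
    obtain ⟨y, hyB, hy0⟩ :=
      Filter.nonempty_of_mem (Filter.inter_mem hnhds self_mem_nhdsWithin)
    exact ⟨y, hy0, hyB⟩
  choose y hy0 hyB using key
  set q : ℕ → ℍ[ℝ] := fun n => y n • sliceSeq n with hq
  set U : Set ℍ[ℝ] := (Set.range q)ᶜ with hU
  have hUopen : IsOpen[sliceTopology] U := by
    rw [isOpen_slice_iff]
    intro I hI
    rw [hU, Set.preimage_compl]
    have hsub : (Subtype.val ⁻¹' Set.range q : Set (qslice I)).Subsingleton := by
      rintro p ⟨n, hn⟩ p' ⟨k, hk⟩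
      have hpn : y n • sliceSeq n ∈ qslice I := by
        have := p.2; rwa [← hn] at this
      have hpk : y k • sliceSeq k ∈ qslice I := by
        have := p'.2; rwa [← hk] at this
      have hnk : n = k := slice_unique hI (hy0 n) (hy0 k) hpn hpk
      apply Subtype.ext
      rw [← hn, ← hk, hnk]
    exact hsub.finite.isClosed.isOpen_compl
  have h0U : (0:ℍ[ℝ]) ∈ U := by
    simp only [hU, Set.mem_compl_iff, Set.mem_range, not_exists]
    intro n h
    exact smul_ne_zero (hy0 n) (sliceSeq_ne_zero n) h
  obtain ⟨n, hn⟩ := hbasis U hUopen h0U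
  exact (hn (hyB n)) ⟨n, rfl⟩

/-- The slice topology on `ℍ` is not metrizable: no metric induces it. -/
theorem sliceTopology_not_metrizable :
    ¬ ∃ m : MetricSpace ℍ[ℝ], m.toUniformSpace.toTopologicalSpace = sliceTopology := by
  rintro ⟨m, hm⟩
  refine slice_aux (fun n => @Metric.ball _ m.toPseudoMetricSpace 0 (1/((n:ℝ)+1)))
    (fun n => ?_) (fun n => ?_) (fun U hUopen h0U => ?_)
  · rw [← hm]
    exact @Metric.isOpen_ball _ m.toPseudoMetricSpace 0 _
  · exact @Metric.mem_ball_self _ m.toPseudoMetricSpace 0 _ (by positivity)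
  · have hUm : @IsOpen _ m.toUniformSpace.toTopologicalSpace U := by
      rw [hm]; exact hUopen
    obtain ⟨ε, hε, hball⟩ := (@Metric.isOpen_iff _ m.toPseudoMetricSpace U).mp hUm 0 h0U
    obtain ⟨n, hn⟩ := exists_nat_one_div_lt hε
    exact ⟨n, fun x hx =>
      hball (@Metric.ball_subset_ball _ m.toPseudoMetricSpace _ _ _ hn.le x hx)⟩
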